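/- arXiv:2006.08476 — 2 statements merged into one kernel-verified Lean document; each statement's English description precedes it below -/
import Mathlib

section
/- Let y be uniform on {±1} and, conditionally on y, let x ~ N(yμ, σ²I_d) for μ ∈ R^d and σ > 0. For w ∈ R^d with w ≠ 0 and ε ≥ 0, the ℓ∞-robust classification error at radius ε of the linear classifier f_w(x) = sgn(wᵀx) — i.e. the probability that there exists u with ‖u − x‖_∞ ≤ ε and y·wᵀu ≤ 0 — equals Q( (μᵀw − ε‖w‖₁)/(σ‖w‖₂) ), where Q(t) = (1/√(2π))∫_t^∞ e^{−s²/2} ds is the standard Gaussian upper tail function. -/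
open MeasureTheory ProbabilityTheory

noncomputable section

/-- Euclidean (ℓ²) norm on `Fin d → ℝ`. -/
def nrm2 {d : ℕ} (x : Fin d → ℝ) : ℝ := Real.sqrt (∑ i, (x i) ^ 2)

/-- Euclidean inner product on `Fin d → ℝ`. -/
def ip {d : ℕ} (x y : Fin d → ℝ) : ℝ := ∑ i, x i * y i

/-- ℓ¹ norm on `Fin d → ℝ`. -/
def nrm1 {d : ℕ} (x : Fin d → ℝ) : ℝ := ∑ i, |x i|

/-- ℓ∞ norm on `Fin d → ℝ`. -/
def nrmInf {d : ℕ} (x : Fin d → ℝ) : ℝ := ⨆ i, |x i|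

/-- Gaussian measure `N(μ, σ² I)` on `Fin s → ℝ`. -/
def gaussPi {s : ℕ} (μ : Fin s → ℝ) (σ : ℝ) : Measure (Fin s → ℝ) :=
  Measure.pi fun i => gaussianReal (μ i) ⟨σ ^ 2, sq_nonneg σ⟩

/-- Labeled Gaussian model: `y` uniform on `{±1}` and `x | y ~ N(yμ, σ²I)`. -/
def gaussLabeled {d : ℕ} (μ : Fin d → ℝ) (σ : ℝ) : Measure ((Fin d → ℝ) × ℝ) :=
  (1 / 2 : ENNReal) • ((gaussPi μ σ).map fun x => (x, (1 : ℝ))) +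
  (1 / 2 : ENNReal) • ((gaussPi (-μ) σ).map fun x => (x, (-1 : ℝ)))

/-- The standard Gaussian upper tail function `Q(t) = (1/√(2π)) ∫_t^∞ e^{-s²/2} ds`. -/
def gaussQ (t : ℝ) : ℝ :=
  (Real.sqrt (2 * Real.pi))⁻¹ * ∫ s in Set.Ioi t, Real.exp (-s ^ 2 / 2)

open Real NNReal

/-! ### Auxiliary lemmas -/

lemma aux_mul_sign_self (x : ℝ) : x * Real.sign x = |x| := by
  rcases lt_trichotomy x 0 with h | h | h
  · rw [Real.sign_of_neg h, abs_of_neg h]; ring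
  · simp [h]
  · rw [Real.sign_of_pos h, abs_of_pos h]; ring

lemma aux_abs_sign_le (x : ℝ) : |Real.sign x| ≤ 1 := by
  rcases lt_trichotomy x 0 with h | h | h
  · simp [Real.sign_of_neg h]
  · simp [h]
  · simp [Real.sign_of_pos h]

lemma aux_robust_iff {d : ℕ} [Nonempty (Fin d)] (w : Fin d → ℝ) {ε : ℝ} (hε : 0 ≤ ε)
    (x : Fin d → ℝ) {y : ℝ} (hy : y = 1 ∨ y = -1) :
    (∃ u, nrmInf (u - x) ≤ ε ∧ y * ip w u ≤ 0) ↔ y * ip w x ≤ ε * nrm1 w := by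
  have hy2 : y * y = 1 := by rcases hy with h | h <;> simp [h]
  have hyabs : |y| = 1 := by rcases hy with h | h <;> simp [h]
  constructor
  · rintro ⟨u, hinf, hu⟩
    have hbd : ∀ i, |u i - x i| ≤ ε := by
      intro i
      refine le_trans ?_ hinf
      exact le_ciSup (f := fun j => |u j - x j|) (Set.Finite.bddAbove (Set.finite_range _)) i
    have : y * ip w x = y * ip w u + ∑ i, y * w i * (x i - u i) := by
      simp only [ip, Finset.mul_sum, ← Finset.sum_add_distrib]
      congr 1; funext i; ring
    rw [this]
    have h1 : ∑ i, y * w i * (x i - u i) ≤ ε * nrm1 w := by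
      rw [nrm1, Finset.mul_sum]
      refine Finset.sum_le_sum fun i _ => ?_
      calc y * w i * (x i - u i) ≤ |y * w i * (x i - u i)| := le_abs_self _
        _ = |w i| * |x i - u i| := by rw [abs_mul, abs_mul, hyabs, one_mul]
        _ ≤ |w i| * ε := by
            have := hbd i; rw [abs_sub_comm] at this
            exact mul_le_mul_of_nonneg_left this (abs_nonneg _)
        _ = ε * |w i| := mul_comm _ _
    linarith
  · intro h
    refine ⟨fun i => x i - y * ε * Real.sign (w i), ?_, ?_⟩
    · rw [nrmInf]
      refine ciSup_le fun i => ?_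
      simp only [Pi.sub_apply]
      have : x i - y * ε * Real.sign (w i) - x i = -(y * ε * Real.sign (w i)) := by ring
      rw [this, abs_neg, abs_mul, abs_mul, hyabs, one_mul, abs_of_nonneg hε]
      calc ε * |Real.sign (w i)| ≤ ε * 1 := mul_le_mul_of_nonneg_left (aux_abs_sign_le _) hε
        _ = ε := mul_one ε
    · have : y * ip w (fun i => x i - y * ε * Real.sign (w i))
          = y * ip w x - ε * nrm1 w := by
        simp only [ip, nrm1, Finset.mul_sum, ← Finset.sum_sub_distrib]
        congr 1; funext i
        have : w i * Real.sign (w i) = |w i| := aux_mul_sign_self _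
        calc y * (w i * (x i - y * ε * Real.sign (w i)))
            = y * (w i * x i) - (y*y) * ε * (w i * Real.sign (w i)) := by ring
          _ = y * (w i * x i) - ε * |w i| := by rw [hy2, this]; ring
      rw [this]
      linarith

/-! ### Gaussian convolution -/

lemma aux_sq_complete (V U a b z x : ℝ) (hV : V ≠ 0) (hU : U ≠ 0) (hVU : V + U ≠ 0) :
    -(x - a)^2/(2*V) + -(z-x-b)^2/(2*U)
      = -((z-a-b)^2)/(2*(V+U)) + -((V+U)/(2*V*U))*(x-(a+V*(z-a-b)/(V+U)))^2 := by
  field_simp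
  ring

lemma aux_gauss_pdf_conv (a b : ℝ) {v u : ℝ≥0} (hv : v ≠ 0) (hu : u ≠ 0) (z : ℝ) :
    ∫ x, gaussianPDFReal a v x * gaussianPDFReal b u (z - x)
      = gaussianPDFReal (a + b) (v + u) z := by
  have hV : (0:ℝ) < v := by positivity
  have hU : (0:ℝ) < u := by positivity
  have hVU : (0:ℝ) < (v:ℝ) + (u:ℝ) := by positivity
  have hkpos : (0:ℝ) < ((v:ℝ) + (u:ℝ)) / (2 * v * u) := by positivity
  have key : ∀ x : ℝ, gaussianPDFReal a v x * gaussianPDFReal b u (z - x)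
      = ((Real.sqrt (2 * π * v))⁻¹ * (Real.sqrt (2 * π * u))⁻¹
          * Real.exp (-((z-a-b)^2) / (2 * ((v:ℝ) + u))))
        * Real.exp (-(((v:ℝ) + u) / (2 * v * u))
            * (x - (a + v * (z-a-b) / ((v:ℝ) + u))) ^ 2) := by
    intro x
    simp only [gaussianPDFReal]
    rw [show ((√(2 * π * ↑v))⁻¹ * rexp (-(x - a) ^ 2 / (2 * ↑v)))
        * ((√(2 * π * ↑u))⁻¹ * rexp (-(z - x - b) ^ 2 / (2 * ↑u)))
      = (√(2 * π * ↑v))⁻¹ * (√(2 * π * ↑u))⁻¹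
        * (rexp (-(x - a) ^ 2 / (2 * ↑v)) * rexp (-(z - x - b) ^ 2 / (2 * ↑u))) by ring,
      ← Real.exp_add, aux_sq_complete (v:ℝ) (u:ℝ) a b z x hV.ne' hU.ne' hVU.ne',
      Real.exp_add]
    ring
  rw [MeasureTheory.integral_congr_ae (Filter.Eventually.of_forall key),
    MeasureTheory.integral_const_mul,
    integral_sub_right_eq_self (fun x => Real.exp (-(((v:ℝ) + u) / (2 * v * u)) * x ^ 2)) _,
    integral_gaussian]
  have h1 : Real.sqrt (π / (((v:ℝ) + u) / (2 * v * u)))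
      = Real.sqrt (2 * π * v * u / ((v:ℝ) + u)) := by
    congr 1
    field_simp
  rw [h1]
  simp only [gaussianPDFReal]
  have hc : (√(2 * π * (v:ℝ)))⁻¹ * (√(2 * π * (u:ℝ)))⁻¹ * √(2 * π * v * u / ((v:ℝ) + u))
      = (√(2 * π * ((v:ℝ) + (u:ℝ))))⁻¹ := by
    rw [← Real.sqrt_inv, ← Real.sqrt_inv, ← Real.sqrt_mul (by positivity),
      ← Real.sqrt_mul (by positivity), ← Real.sqrt_inv]
    congr 1
    field_simp
  push_cast
  rw [show (√(2 * π * (v:ℝ)))⁻¹ * (√(2 * π * (u:ℝ)))⁻¹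
        * rexp (-((z-a-b)^2) / (2 * ((v:ℝ) + u))) * √(2 * π * v * u / ((v:ℝ) + u))
    = ((√(2 * π * (v:ℝ)))⁻¹ * (√(2 * π * (u:ℝ)))⁻¹ * √(2 * π * v * u / ((v:ℝ) + u)))
        * rexp (-((z-a-b)^2) / (2 * ((v:ℝ) + u))) by ring, hc]
  congr 2
  ring

lemma aux_pdf_mul_integrable (a b : ℝ) (v u : ℝ≥0) (z : ℝ) :
    Integrable (fun x => gaussianPDFReal a v x * gaussianPDFReal b u (z - x)) := by
  rw [show (fun x => gaussianPDFReal a v x * gaussianPDFReal b u (z - x))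
      = fun x => gaussianPDFReal b u (z - x) * gaussianPDFReal a v x
    from funext fun x => mul_comm _ _]
  refine Integrable.bdd_mul (c := (Real.sqrt (2 * π * u))⁻¹) (integrable_gaussianPDFReal a v)
    ((measurable_gaussianPDFReal b u).comp (measurable_const.sub measurable_id)).aestronglyMeasurable
    (ae_of_all _ fun x => ?_)
  rw [Real.norm_eq_abs, abs_of_nonneg (gaussianPDFReal_nonneg _ _ _)]
  unfold gaussianPDFReal
  calc (√(2 * π * ↑u))⁻¹ * rexp (-(z - x - b) ^ 2 / (2 * ↑u))
      ≤ (√(2 * π * ↑u))⁻¹ * 1 := by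
        refine mul_le_mul_of_nonneg_left ?_ (by positivity)
        rw [Real.exp_le_one_iff]
        by_cases hu : (u:ℝ) = 0
        · simp [hu]
        · exact div_nonpos_of_nonpos_of_nonneg (neg_nonpos.mpr (sq_nonneg _)) (by positivity)
    _ = (√(2 * π * ↑u))⁻¹ := mul_one _

lemma aux_lintegral_pdf_conv (a b : ℝ) {v u : ℝ≥0} (hv : v ≠ 0) (hu : u ≠ 0) (z : ℝ) :
    ∫⁻ x, gaussianPDF a v x * gaussianPDF b u (z - x) = gaussianPDF (a + b) (v + u) z := by
  have h1 : ∀ x, gaussianPDF a v x * gaussianPDF b u (z - x)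
      = ENNReal.ofReal (gaussianPDFReal a v x * gaussianPDFReal b u (z - x)) := by
    intro x
    rw [gaussianPDF, gaussianPDF, ENNReal.ofReal_mul (gaussianPDFReal_nonneg _ _ _)]
  simp_rw [h1]
  rw [← ofReal_integral_eq_lintegral_ofReal (aux_pdf_mul_integrable a b v u z)
      (ae_of_all _ fun x => mul_nonneg (gaussianPDFReal_nonneg _ _ _) (gaussianPDFReal_nonneg _ _ _)),
    aux_gauss_pdf_conv a b hv hu z]
  rfl

lemma aux_gauss_conv (a b : ℝ) (v u : ℝ≥0) :
    ((gaussianReal a v).prod (gaussianReal b u)).map (fun p => p.1 + p.2)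
      = gaussianReal (a + b) (v + u) := by
  by_cases hv : v = 0
  · subst hv
    rw [gaussianReal_zero_var, Measure.dirac_prod,
      Measure.map_map (by fun_prop) measurable_prodMk_left]
    have : ((fun p : ℝ × ℝ => p.1 + p.2) ∘ Prod.mk a) = (a + ·) := rfl
    rw [this, gaussianReal_map_const_add, add_comm b a, zero_add]
  by_cases hu : u = 0
  · subst hu
    rw [gaussianReal_zero_var, Measure.prod_dirac,
      Measure.map_map (by fun_prop) measurable_prodMk_right]
    have : ((fun p : ℝ × ℝ => p.1 + p.2) ∘ (fun x => (x, b))) = (· + b) := rfl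
    rw [this, gaussianReal_map_add_const, add_zero]
  have hvu : v + u ≠ 0 := by simp [hv]
  have hmeasadd : Measurable (fun p : ℝ × ℝ => p.1 + p.2) := by fun_prop
  have hpdfmeas : Measurable fun p : ℝ × ℝ =>
      gaussianPDF a v p.1 * gaussianPDF b u (p.2 - p.1) :=
    ((measurable_gaussianPDF a v).comp measurable_fst).mul
      ((measurable_gaussianPDF b u).comp (measurable_snd.sub measurable_fst))
  ext s hs
  rw [Measure.map_apply hmeasadd hs, Measure.prod_apply (hmeasadd hs),
    gaussianReal_apply _ hvu s]
  have h1 : ∀ x : ℝ, gaussianReal b u (Prod.mk x ⁻¹' ((fun p : ℝ × ℝ => p.1 + p.2) ⁻¹' s))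
      = ∫⁻ z in s, gaussianPDF b u (z - x) := by
    intro x
    have hset : (Prod.mk x ⁻¹' ((fun p : ℝ × ℝ => p.1 + p.2) ⁻¹' s)) = (x + ·) ⁻¹' s := rfl
    rw [hset, ← Measure.map_apply (by fun_prop) hs, gaussianReal_map_const_add,
      gaussianReal_apply _ hu s]
    refine lintegral_congr fun z => ?_
    rw [gaussianPDF, gaussianPDF, gaussianPDFReal_sub]
  simp_rw [h1]
  rw [gaussianReal_of_var_ne_zero _ hv,
    lintegral_withDensity_eq_lintegral_mul _ (measurable_gaussianPDF a v)
      (Measurable.lintegral_prod_right (f := fun x z => gaussianPDF b u (z - x))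
        (((measurable_gaussianPDF b u).comp (measurable_snd.sub measurable_fst))))]
  have h2 : ∫⁻ x, gaussianPDF a v x * ∫⁻ z in s, gaussianPDF b u (z - x)
      = ∫⁻ x, ∫⁻ z in s, gaussianPDF a v x * gaussianPDF b u (z - x) :=
    lintegral_congr fun x => (lintegral_const_mul' _ _ ENNReal.ofReal_ne_top).symm
  simp only [Pi.mul_apply]
  rw [h2, lintegral_lintegral_swap (f := fun x z => gaussianPDF a v x * gaussianPDF b u (z - x))
    hpdfmeas.aemeasurable]
  refine lintegral_congr fun z => aux_lintegral_pdf_conv a b hv hu z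

/-! ### The law of the linear statistic -/

lemma aux_measurable_ip {d : ℕ} (w : Fin d → ℝ) : Measurable (fun x : Fin d → ℝ => ip w x) := by
  unfold ip
  exact Finset.measurable_sum _ fun i _ => (measurable_const.mul (measurable_pi_apply i))

lemma aux_map_ip {d : ℕ} (μ : Fin d → ℝ) (σ : ℝ) (w : Fin d → ℝ) :
    (gaussPi μ σ).map (fun x => ip w x)
      = gaussianReal (ip w μ) ⟨σ ^ 2 * ∑ i, (w i) ^ 2, by positivity⟩ := by
  induction d with
  | zero =>
      have h0 : (fun x : Fin 0 → ℝ => ip w x) = fun _ => (0:ℝ) := by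
        funext x; simp [ip]
      have : IsProbabilityMeasure (gaussPi μ σ) := by
        unfold gaussPi
        haveI : ∀ i, IsProbabilityMeasure (gaussianReal (μ i) ⟨σ ^ 2, sq_nonneg σ⟩) := fun i => instIsProbabilityMeasureGaussianReal _ _
        infer_instance
      rw [h0, Measure.map_const, measure_univ, one_smul]
      have : (⟨σ ^ 2 * ∑ i : Fin 0, (w i) ^ 2, by positivity⟩ : ℝ≥0) = 0 := by
        ext; simp
      rw [this]
      show Measure.dirac 0 = gaussianReal (ip w μ) (0:ℝ≥0)
      rw [gaussianReal_zero_var, show ip w μ = 0 by simp [ip]]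
  | succ n IH =>
      set V : ℝ≥0 := ⟨σ ^ 2, sq_nonneg σ⟩ with hV
      have hmp := measurePreserving_piFinSuccAbove
        (fun i : Fin (n+1) => gaussianReal (μ i) V) 0
      have hdecomp : (fun x : Fin (n+1) → ℝ => ip w x)
          = (fun p : ℝ × (Fin n → ℝ) => w 0 * p.1 + ip (w ∘ Fin.succ) p.2)
            ∘ (MeasurableEquiv.piFinSuccAbove (fun _ => ℝ) 0) := by
        funext x
        simp [ip, Fin.sum_univ_succ, MeasurableEquiv.piFinSuccAbove, Fin.succAbove, Fin.tail]
      rw [show gaussPi μ σ = Measure.pi (fun i : Fin (n+1) => gaussianReal (μ i) V) from rfl,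
        hdecomp]
      have hg : Measurable (fun p : ℝ × (Fin n → ℝ) => w 0 * p.1 + ip (w ∘ Fin.succ) p.2) :=
        (measurable_const.mul measurable_fst).add ((aux_measurable_ip _).comp measurable_snd)
      rw [← Measure.map_map hg (MeasurableEquiv.measurable _), hmp.map_eq]
      have hsucc : (Measure.pi fun j : Fin n => gaussianReal (μ ((0:Fin (n+1)).succAbove j)) V)
          = gaussPi (μ ∘ Fin.succ) σ := by
        unfold gaussPi
        congr 1
      rw [hsucc]
      have hstep : (fun p : ℝ × (Fin n → ℝ) => w 0 * p.1 + ip (w ∘ Fin.succ) p.2)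
          = (fun q : ℝ × ℝ => q.1 + q.2)
            ∘ (Prod.map (fun t : ℝ => w 0 * t) (fun x : Fin n → ℝ => ip (w ∘ Fin.succ) x)) := by
        funext p; rfl
      have : IsProbabilityMeasure (gaussPi (μ ∘ Fin.succ) σ) := by
        unfold gaussPi
        haveI : ∀ i, IsProbabilityMeasure (gaussianReal ((μ ∘ Fin.succ) i) ⟨σ ^ 2, sq_nonneg σ⟩) := fun i => instIsProbabilityMeasureGaussianReal _ _
        infer_instance
      have hmul : Measurable (fun t : ℝ => w 0 * t) := measurable_const.mul measurable_id
      have hadd : Measurable (fun q : ℝ × ℝ => q.1 + q.2) := measurable_fst.add measurable_snd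
      have hipm : Measurable (fun x : Fin n → ℝ => ip (w ∘ Fin.succ) x) := aux_measurable_ip _
      rw [hstep, ← Measure.map_map hadd (hmul.prodMap hipm),
        ← Measure.map_prod_map _ _ hmul hipm]
      rw [show ((gaussianReal (μ 0) V).map fun t => w 0 * t)
          = gaussianReal (w 0 * μ 0) (⟨(w 0)^2, sq_nonneg _⟩ * V) from
        gaussianReal_map_const_mul (w 0), IH (μ ∘ Fin.succ) (w ∘ Fin.succ)]
      refine (aux_gauss_conv _ _ _ _).trans ?_
      congr 1
      · simp [ip, Fin.sum_univ_succ]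
      · ext
        push_cast
        simp only [hV]
        simp [Fin.sum_univ_succ, NNReal.coe_mul]
        show w 0 ^ 2 * σ ^ 2 + σ ^ 2 * ∑ x : Fin n, w x.succ ^ 2 = σ ^ 2 * (w 0 ^ 2 + ∑ x : Fin n, w x.succ ^ 2)
        ring

/-! ### Evaluating the Gaussian CDF -/

lemma aux_gauss_neg_Ici (m : ℝ) (V : ℝ≥0) (r : ℝ) :
    gaussianReal (-m) V (Set.Ici (-r)) = gaussianReal m V (Set.Iic r) := by
  have h : (gaussianReal m V).map (fun x : ℝ => -1 * x) = gaussianReal (-m) V := by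
    rw [gaussianReal_map_const_mul]
    congr 1
    · ring
    · ext; push_cast; ring_nf
  rw [← h, Measure.map_apply (measurable_const_mul _) measurableSet_Ici]
  congr 1
  ext x
  simp only [Set.mem_preimage, Set.mem_Ici, Set.mem_Iic]
  constructor <;> intro hx <;> linarith

lemma aux_gauss_Iic_eq_gaussQ (m a : ℝ) {c : ℝ} (hc : 0 < c) :
    (gaussianReal m ⟨c ^ 2, sq_nonneg c⟩ (Set.Iic a)).toReal = gaussQ ((m - a) / c) := by
  have h1 : gaussianReal m (⟨c ^ 2, sq_nonneg c⟩ : ℝ≥0)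
      = ((gaussianReal 0 1).map (fun s => c * s)).map (fun s => m + s) := by
    rw [gaussianReal_map_const_mul]
    have : ((⟨c^2, sq_nonneg c⟩ : ℝ≥0) * 1) = (⟨c^2, sq_nonneg c⟩ : ℝ≥0) := mul_one _
    rw [mul_zero, mul_one, gaussianReal_map_const_add, zero_add]
    rfl
  rw [h1, Measure.map_apply (measurable_const_add _) measurableSet_Iic,
    Measure.map_apply (measurable_const_mul _) ((measurableSet_Iic).preimage (measurable_const_add _))]
  have hset : ((fun s => c * s) ⁻¹' ((fun s => m + s) ⁻¹' Set.Iic a)) = Set.Iic ((a - m)/c) := by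
    ext x
    simp only [Set.mem_preimage, Set.mem_Iic]
    rw [le_div_iff₀ hc]
    constructor <;> intro h <;> nlinarith
  rw [hset, gaussianReal_apply_eq_integral _ one_ne_zero,
    ENNReal.toReal_ofReal (integral_nonneg fun x => gaussianPDFReal_nonneg _ _ _)]
  have hpdf : ∀ x : ℝ, gaussianPDFReal 0 1 x = (Real.sqrt (2 * π))⁻¹ * Real.exp (-x^2/2) := by
    intro x
    simp [gaussianPDFReal]
  rw [MeasureTheory.integral_congr_ae (Filter.Eventually.of_forall fun x => hpdf x),
    integral_const_mul]
  unfold gaussQ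
  congr 1
  have heven : ∫ s in Set.Ioi (-((a-m)/c)), Real.exp (-s^2/2)
      = ∫ s in Set.Ioi (-((a-m)/c)), (fun t : ℝ => Real.exp (-t^2/2)) (-s) :=
    MeasureTheory.integral_congr_ae (Filter.Eventually.of_forall fun s => by simp [neg_sq])
  rw [show (m-a)/c = -((a-m)/c) by ring, heven]
  have h2 := integral_comp_neg_Ioi (-((a-m)/c)) (fun t : ℝ => rexp (-t^2/2))
  rw [neg_neg] at h2
  exact h2.symm

/-- exact formula for the ℓ∞-robust error of a linear classifier on a
symmetric Gaussian mixture. -/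
theorem robust_error_of_linear_classifier_gaussian
    {d : ℕ} (μ : Fin d → ℝ) (σ : ℝ) (hσ : 0 < σ)
    (w : Fin d → ℝ) (hw : w ≠ 0) (ε : ℝ) (hε : 0 ≤ ε) :
    ((gaussLabeled μ σ)
        {p | ∃ u, nrmInf (u - p.1) ≤ ε ∧ p.2 * ip w u ≤ 0}).toReal
      = gaussQ ((ip μ w - ε * nrm1 w) / (σ * nrm2 w)) := by
  classical
  obtain ⟨i0, hi0⟩ : ∃ i, w i ≠ 0 := by
    by_contra h
    push_neg at h
    exact hw (funext h)
  have hne : Nonempty (Fin d) := ⟨i0⟩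
  set S : Set ((Fin d → ℝ) × ℝ) := {p | ∃ u, nrmInf (u - p.1) ≤ ε ∧ p.2 * ip w u ≤ 0} with hS
  set a : ℝ := ε * nrm1 w with ha
  have hipm : Measurable (fun x : Fin d → ℝ => ip w x) := aux_measurable_ip w
  have hpre1 : (fun x : Fin d → ℝ => (x, (1:ℝ))) ⁻¹' S
      = (fun x : Fin d → ℝ => ip w x) ⁻¹' Set.Iic a := by
    ext x
    simp only [hS, Set.mem_preimage, Set.mem_setOf_eq, Set.mem_Iic]
    rw [aux_robust_iff w hε x (Or.inl rfl), one_mul]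
  have hpre2 : (fun x : Fin d → ℝ => (x, (-1:ℝ))) ⁻¹' S
      = (fun x : Fin d → ℝ => ip w x) ⁻¹' Set.Ici (-a) := by
    ext x
    simp only [hS, Set.mem_preimage, Set.mem_setOf_eq, Set.mem_Ici]
    rw [aux_robust_iff w hε x (Or.inr rfl)]
    constructor <;> intro h <;> nlinarith
  set V : ℝ≥0 := ⟨σ ^ 2 * ∑ i, (w i) ^ 2, by positivity⟩ with hV
  have hM1 : ((gaussPi μ σ).map fun x => (x, (1:ℝ))) S
      = gaussianReal (ip w μ) V (Set.Iic a) := by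
    rw [(measurableEmbedding_prod_mk_right (1:ℝ)).map_apply, hpre1,
      ← Measure.map_apply hipm measurableSet_Iic, aux_map_ip]
  have hM2 : ((gaussPi (-μ) σ).map fun x => (x, (-1:ℝ))) S
      = gaussianReal (ip w μ) V (Set.Iic a) := by
    rw [(measurableEmbedding_prod_mk_right (-1:ℝ)).map_apply, hpre2,
      ← Measure.map_apply hipm measurableSet_Ici, aux_map_ip]
    have hnegip : ip w (-μ) = -(ip w μ) := by
      simp only [ip, Pi.neg_apply, mul_neg]
      rw [Finset.sum_neg_distrib]
    rw [hnegip]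
    exact aux_gauss_neg_Ici _ _ _
  rw [gaussLabeled, Measure.add_apply, Measure.smul_apply, Measure.smul_apply, hM1, hM2]
  simp only [smul_eq_mul]
  rw [← add_mul, show (1/2 + 1/2 : ENNReal) = 1 by simp [ENNReal.inv_two_add_inv_two], one_mul]

  have hc : 0 < σ * nrm2 w := by
    have hsum : 0 < ∑ i, (w i) ^ 2 := by
      refine Finset.sum_pos' (fun i _ => sq_nonneg _) ⟨i0, Finset.mem_univ _, by positivity⟩
    have : 0 < nrm2 w := Real.sqrt_pos.mpr hsum
    positivity
  have hVc : V = (⟨(σ * nrm2 w) ^ 2, sq_nonneg _⟩ : ℝ≥0) := by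
    ext
    simp only [hV, NNReal.coe_mk]
    show σ ^ 2 * ∑ i, (w i) ^ 2 = (σ * nrm2 w) ^ 2
    rw [mul_pow, nrm2, Real.sq_sqrt (Finset.sum_nonneg fun i _ => sq_nonneg _)]
  rw [hVc, aux_gauss_Iic_eq_gaussQ _ _ hc]
  have hcomm : ip μ w = ip w μ := Finset.sum_congr rfl fun i _ => mul_comm _ _
  rw [hcomm]
end
end

section
/- Let μ ∈ R^d and ε ≥ 0, and suppose |μ_j| > ε for at least one coordinate j. Define the soft-thresholding operator T_ε(μ) by (T_ε(μ))_j = sgn(μ_j)·max{|μ_j| − ε, 0}. Then max over unit vectors w ∈ R^d (‖w‖₂ = 1) of μᵀw − ε‖w‖₁ equals ‖T_ε(μ)‖₂, and the maximum is attained at w = T_ε(μ)/‖T_ε(μ)‖₂. Consequently, among all linear classifiers f_w(x) = sgn(wᵀx) on the Gaussian mixture model x | y ~ N(yμ, σ²I_d), y uniform on {±1}, the ℓ∞-robust classification error at radius ε, which equals Q((μᵀw − ε‖w‖₁)/(σ‖w‖₂)), is minimized at w = T_ε(μ)/‖T_ε(μ)‖₂. -/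
open MeasureTheory ProbabilityTheory

noncomputable section

/-- The soft-thresholding operator `(T_ε(μ))_j = sgn(μ_j)·max{|μ_j| - ε, 0}`. -/
def softThresh {d : ℕ} (ε : ℝ) (μ : Fin d → ℝ) : Fin d → ℝ :=
  fun j => Real.sign (μ j) * max (|μ j| - ε) 0

/-- ℓ∞-robust classification error at radius `ε` of the linear classifier `f_w` on the
symmetric Gaussian mixture. -/
def linRobErr {d : ℕ} (μ : Fin d → ℝ) (σ ε : ℝ) (w : Fin d → ℝ) : ℝ :=
  ((gaussLabeled μ σ) {p | ∃ u, nrmInf (u - p.1) ≤ ε ∧ p.2 * ip w u ≤ 0}).toReal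


/-! ### Auxiliary lemmas -/

section Aux
open Real
open scoped NNReal ENNReal

def nnsq (r : ℝ) : ℝ≥0 := ⟨r ^ 2, sq_nonneg r⟩

/-! ### deterministic auxiliary lemmas -/

lemma real_sign_mul_self (r : ℝ) : r * Real.sign r = |r| := by
  rcases lt_trichotomy r 0 with h | h | h
  · rw [Real.sign_of_neg h, abs_of_neg h]; ring
  · simp [h]
  · rw [Real.sign_of_pos h, abs_of_pos h]; ring

lemma abs_sign_le (r : ℝ) : |Real.sign r| ≤ 1 := by
  rcases lt_trichotomy r 0 with h | h | h <;>
    simp [Real.sign_of_neg, Real.sign_of_pos, *]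

variable {d : ℕ}

lemma abs_softThresh (μ : Fin d → ℝ) {ε : ℝ} (hε : 0 ≤ ε) (j : Fin d) :
    |softThresh ε μ j| = max (|μ j| - ε) 0 := by
  unfold softThresh
  rw [abs_mul, abs_of_nonneg (le_max_right (|μ j| - ε) 0)]
  rcases eq_or_ne (μ j) 0 with h | h
  · rw [h]
    simp only [abs_zero, Real.sign_zero, abs_zero, zero_mul]
    rw [max_eq_right (by linarith)]
  · rcases lt_trichotomy (μ j) 0 with h' | h' | h'
    · rw [Real.sign_of_neg h']; norm_num
    · exact absurd h' h
    · rw [Real.sign_of_pos h']; norm_num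

lemma softThresh_term (μ : Fin d → ℝ) {ε : ℝ} (hε : 0 ≤ ε) (j : Fin d) :
    μ j * softThresh ε μ j - ε * |softThresh ε μ j| = (softThresh ε μ j) ^ 2 := by
  rw [abs_softThresh μ hε]
  unfold softThresh
  have h1 : μ j * (Real.sign (μ j) * max (|μ j| - ε) 0) = |μ j| * max (|μ j| - ε) 0 := by
    rw [← mul_assoc, real_sign_mul_self]
  have h2 : (Real.sign (μ j) * max (|μ j| - ε) 0) ^ 2 = (max (|μ j| - ε) 0) ^ 2 := by
    rcases eq_or_ne (μ j) 0 with h | h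
    · rw [h]; simp only [abs_zero]
      rw [max_eq_right (by linarith)]; ring
    · rcases lt_trichotomy (μ j) 0 with h' | h' | h'
      · rw [Real.sign_of_neg h']; ring
      · exact absurd h' h
      · rw [Real.sign_of_pos h']; ring
  rw [h1, h2]
  rcases le_or_gt (|μ j| - ε) 0 with h | h
  · rw [max_eq_right h]; ring
  · rw [max_eq_left h.le]; ring

lemma ip_sub_eps (μ : Fin d → ℝ) {ε : ℝ} (hε : 0 ≤ ε) :
    ip μ (softThresh ε μ) - ε * nrm1 (softThresh ε μ) = ∑ j, (softThresh ε μ j) ^ 2 := by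
  unfold ip nrm1
  rw [Finset.mul_sum, ← Finset.sum_sub_distrib]
  exact Finset.sum_congr rfl fun j _ => softThresh_term μ hε j

lemma nrm2_nonneg (x : Fin d → ℝ) : 0 ≤ nrm2 x := Real.sqrt_nonneg _

lemma nrm2_sq (x : Fin d → ℝ) : (nrm2 x) ^ 2 = ∑ i, (x i) ^ 2 :=
  Real.sq_sqrt (Finset.sum_nonneg fun i _ => sq_nonneg _)

lemma nrm2_smul (c : ℝ) (x : Fin d → ℝ) : nrm2 (c • x) = |c| * nrm2 x := by
  unfold nrm2
  have h : ∑ i, ((c • x) i) ^ 2 = c ^ 2 * ∑ i, (x i) ^ 2 := by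
    rw [Finset.mul_sum]
    exact Finset.sum_congr rfl fun i _ => by simp [smul_eq_mul]; ring
  rw [h, Real.sqrt_mul (sq_nonneg c), Real.sqrt_sq_eq_abs]

lemma nrm1_smul (c : ℝ) (x : Fin d → ℝ) : nrm1 (c • x) = |c| * nrm1 x := by
  unfold nrm1
  rw [Finset.mul_sum]
  exact Finset.sum_congr rfl fun i _ => by simp [smul_eq_mul, abs_mul]

lemma ip_smul (μ : Fin d → ℝ) (c : ℝ) (x : Fin d → ℝ) : ip μ (c • x) = c * ip μ x := by
  unfold ip
  rw [Finset.mul_sum]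
  exact Finset.sum_congr rfl fun i _ => by simp [smul_eq_mul]; ring

lemma nrm2_softThresh_pos (μ : Fin d → ℝ) {ε : ℝ} (hε : 0 ≤ ε) (hbig : ∃ j, ε < |μ j|) :
    0 < nrm2 (softThresh ε μ) := by
  obtain ⟨j, hj⟩ := hbig
  unfold nrm2
  apply Real.sqrt_pos.2
  apply Finset.sum_pos' (fun i _ => sq_nonneg _) ⟨j, Finset.mem_univ j, ?_⟩
  have : |softThresh ε μ j| = |μ j| - ε := by
    rw [abs_softThresh μ hε, max_eq_left (by linarith)]
  have h2 : softThresh ε μ j ≠ 0 := by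
    intro h0
    rw [h0, abs_zero] at this
    linarith
  positivity

lemma part3 (μ : Fin d → ℝ) {ε : ℝ} (hε : 0 ≤ ε) (w : Fin d → ℝ) (hw : nrm2 w = 1) :
    ip μ w - ε * nrm1 w ≤ nrm2 (softThresh ε μ) := by
  have step1 : ip μ w - ε * nrm1 w ≤ ∑ i, |softThresh ε μ i| * |w i| := by
    unfold ip nrm1
    rw [Finset.mul_sum, ← Finset.sum_sub_distrib]
    refine Finset.sum_le_sum fun i _ => ?_
    have h1 : μ i * w i ≤ |μ i| * |w i| := by
      calc μ i * w i ≤ |μ i * w i| := le_abs_self _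
        _ = |μ i| * |w i| := abs_mul _ _
    have h2 : (|μ i| - ε) * |w i| ≤ max (|μ i| - ε) 0 * |w i| :=
      mul_le_mul_of_nonneg_right (le_max_left _ _) (abs_nonneg _)
    rw [abs_softThresh μ hε]
    nlinarith [abs_nonneg (w i)]
  have step2 : ∑ i, |softThresh ε μ i| * |w i| ≤ nrm2 (softThresh ε μ) * nrm2 w := by
    have hcs := Finset.sum_mul_sq_le_sq_mul_sq Finset.univ
      (fun i => |softThresh ε μ i|) (fun i => |w i|)
    simp only [sq_abs] at hcs
    have ha : 0 ≤ ∑ i, |softThresh ε μ i| * |w i| :=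
      Finset.sum_nonneg fun i _ => mul_nonneg (abs_nonneg _) (abs_nonneg _)
    have hb : 0 ≤ nrm2 (softThresh ε μ) * nrm2 w :=
      mul_nonneg (nrm2_nonneg _) (nrm2_nonneg _)
    have hsq : (∑ i, |softThresh ε μ i| * |w i|) ^ 2
        ≤ (nrm2 (softThresh ε μ) * nrm2 w) ^ 2 := by
      rw [mul_pow, nrm2_sq, nrm2_sq]
      exact hcs
    exact (pow_le_pow_iff_left₀ ha hb two_ne_zero).1 hsq
  calc ip μ w - ε * nrm1 w ≤ nrm2 (softThresh ε μ) * nrm2 w := step1.trans step2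
    _ = nrm2 (softThresh ε μ) := by rw [hw, mul_one]


lemma gaussianPDFReal_mul_eq (m1 m2 z : ℝ) {v1 v2 : ℝ≥0} (h1 : v1 ≠ 0) (h2 : v2 ≠ 0) (x : ℝ) :
    gaussianPDFReal m1 v1 x * gaussianPDFReal m2 v2 (z - x)
      = gaussianPDFReal (m1 + m2) (v1 + v2) z *
        gaussianPDFReal (((v2 : ℝ) * m1 + (v1 : ℝ) * (z - m2)) / ((v1 : ℝ) + (v2 : ℝ)))
          (v1 * v2 / (v1 + v2)) x := by
  have ha : (0:ℝ) < v1 := lt_of_le_of_ne v1.coe_nonneg (by exact_mod_cast (Ne.symm h1))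
  have hb : (0:ℝ) < v2 := lt_of_le_of_ne v2.coe_nonneg (by exact_mod_cast (Ne.symm h2))
  have hab : (0:ℝ) < (v1:ℝ) + v2 := by linarith
  have hcast : ((v1 * v2 / (v1 + v2) : ℝ≥0) : ℝ) = (v1:ℝ) * v2 / ((v1:ℝ) + v2) := by
    push_cast; ring
  simp only [gaussianPDFReal, NNReal.coe_add, hcast]
  rw [mul_mul_mul_comm, ← Real.exp_add]
  conv_rhs => rw [mul_mul_mul_comm, ← Real.exp_add]
  congr 1
  · rw [← mul_inv, ← mul_inv, ← Real.sqrt_mul (by positivity), ← Real.sqrt_mul (by positivity)]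
    congr 1
    field_simp
  · congr 1
    field_simp
    ring

lemma lintegral_gaussianPDF_mul (m1 m2 z : ℝ) {v1 v2 : ℝ≥0} (h1 : v1 ≠ 0) (h2 : v2 ≠ 0) :
    ∫⁻ x, gaussianPDF m1 v1 x * gaussianPDF m2 v2 (z - x)
      = gaussianPDF (m1 + m2) (v1 + v2) z := by
  have hv12 : v1 * v2 / (v1 + v2) ≠ 0 := by
    apply div_ne_zero (mul_ne_zero h1 h2)
    simp [h1]
  calc ∫⁻ x, gaussianPDF m1 v1 x * gaussianPDF m2 v2 (z - x)
      = ∫⁻ x, ENNReal.ofReal (gaussianPDFReal m1 v1 x * gaussianPDFReal m2 v2 (z - x)) := by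
        simp_rw [gaussianPDF, ENNReal.ofReal_mul (gaussianPDFReal_nonneg m1 v1 _)]
    _ = ∫⁻ x, ENNReal.ofReal (gaussianPDFReal (m1 + m2) (v1 + v2) z) *
          gaussianPDF (((v2 : ℝ) * m1 + (v1 : ℝ) * (z - m2)) / ((v1 : ℝ) + (v2 : ℝ)))
            (v1 * v2 / (v1 + v2)) x := by
        congr 1 with x
        rw [gaussianPDFReal_mul_eq m1 m2 z h1 h2 x, gaussianPDF,
          ENNReal.ofReal_mul (gaussianPDFReal_nonneg _ _ _)]
    _ = gaussianPDF (m1 + m2) (v1 + v2) z := by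
        rw [lintegral_const_mul _ (measurable_gaussianPDF _ _),
          lintegral_gaussianPDF_eq_one _ hv12, mul_one, gaussianPDF]

lemma gaussianReal_prod_map_add (m1 m2 : ℝ) (v1 v2 : ℝ≥0) :
    Measure.map (fun p : ℝ × ℝ => p.1 + p.2)
        ((gaussianReal m1 v1).prod (gaussianReal m2 v2))
      = gaussianReal (m1 + m2) (v1 + v2) := by
  rcases eq_or_ne v1 0 with rfl | h1
  · rw [gaussianReal_zero_var, Measure.dirac_prod,
      Measure.map_map (by fun_prop : Measurable fun p : ℝ × ℝ => p.1 + p.2) measurable_prodMk_left,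
      show ((fun p : ℝ × ℝ => p.1 + p.2) ∘ Prod.mk m1) = (m1 + ·) from rfl,
      gaussianReal_map_const_add m1, add_comm m2 m1, zero_add]
  rcases eq_or_ne v2 0 with rfl | h2
  · rw [gaussianReal_zero_var, Measure.prod_dirac,
      Measure.map_map (by fun_prop : Measurable fun p : ℝ × ℝ => p.1 + p.2) measurable_prodMk_right,
      show ((fun p : ℝ × ℝ => p.1 + p.2) ∘ (fun x => (x, m2))) = (· + m2) from rfl,
      gaussianReal_map_add_const m2, add_zero]
  have hsum : v1 + v2 ≠ 0 := by simp [h1]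
  ext s hs
  rw [Measure.map_apply (by fun_prop : Measurable fun p : ℝ × ℝ => p.1 + p.2) hs, gaussianReal_of_var_ne_zero _ h1,
    gaussianReal_of_var_ne_zero _ h2, gaussianReal_apply _ hsum,
    Measure.prod_apply (measurable_add hs)]
  have key : ∀ x : ℝ, (volume.withDensity (gaussianPDF m2 v2)) (Prod.mk x ⁻¹' ((fun p : ℝ × ℝ => p.1 + p.2) ⁻¹' s))
      = ∫⁻ z in s, gaussianPDF m2 v2 (z - x) := by
    intro x
    have hA : Prod.mk x ⁻¹' ((fun p : ℝ × ℝ => p.1 + p.2) ⁻¹' s) = (fun y => x + y) ⁻¹' s := rfl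
    have hAm : MeasurableSet ((fun y : ℝ => x + y) ⁻¹' s) := (measurable_const_add x) hs
    rw [hA, withDensity_apply _ hAm, ← lintegral_indicator hAm]
    have hind : ∀ y : ℝ, ((fun y : ℝ => x + y) ⁻¹' s).indicator
        (gaussianPDF m2 v2) y = s.indicator (fun z => gaussianPDF m2 v2 (z - x)) (x + y) := by
      intro y
      by_cases hy : x + y ∈ s <;> simp [Set.indicator, hy, Set.mem_preimage, add_sub_cancel_left]
    simp_rw [hind]
    rw [lintegral_add_left_eq_self (s.indicator (fun z => gaussianPDF m2 v2 (z - x))) x,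
      lintegral_indicator hs]
  simp_rw [key]
  have hm : Measurable fun q : ℝ × ℝ => gaussianPDF m1 v1 q.1 * gaussianPDF m2 v2 (q.2 - q.1) :=
    ((measurable_gaussianPDF _ _).comp measurable_fst).mul
      ((measurable_gaussianPDF _ _).comp (measurable_snd.sub measurable_fst))
  rw [lintegral_withDensity_eq_lintegral_mul _ (measurable_gaussianPDF _ _)
      (Measurable.lintegral_prod_right (f := fun x z => gaussianPDF m2 v2 (z - x))
        ((measurable_gaussianPDF _ _).comp (measurable_snd.sub measurable_fst)))]
  calc ∫⁻ x, gaussianPDF m1 v1 x * ∫⁻ z in s, gaussianPDF m2 v2 (z - x)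
      = ∫⁻ x, ∫⁻ z in s, gaussianPDF m1 v1 x * gaussianPDF m2 v2 (z - x) := by
        refine lintegral_congr fun x => ?_
        have : Measurable fun z : ℝ => gaussianPDF m2 v2 (z - x) :=
          (measurable_gaussianPDF _ _).comp (measurable_sub_const x)
        exact (lintegral_const_mul _ this).symm
    _ = ∫⁻ z in s, ∫⁻ x, gaussianPDF m1 v1 x * gaussianPDF m2 v2 (z - x) :=
        lintegral_lintegral_swap hm.aemeasurable
    _ = ∫⁻ z in s, gaussianPDF (m1 + m2) (v1 + v2) z :=
        lintegral_congr fun z => lintegral_gaussianPDF_mul m1 m2 z h1 h2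



instance {s : ℕ} (μ : Fin s → ℝ) (σ : ℝ) : IsProbabilityMeasure (gaussPi μ σ) := by
  unfold gaussPi; exact @Measure.pi.instIsProbabilityMeasure _ _ _ _ _ fun i => instIsProbabilityMeasureGaussianReal _ _


lemma gaussPi_map_sum {d : ℕ} (μ : Fin d → ℝ) (σ : ℝ) (w : Fin d → ℝ) :
    (gaussPi μ σ).map (fun x => ∑ i, w i * x i)
      = gaussianReal (∑ i, w i * μ i)
          (∑ i, nnsq (w i) * nnsq σ) := by
  induction d with
  | zero =>
      simp only [Finset.univ_eq_empty, Finset.sum_empty]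
      rw [show (fun x : Fin 0 → ℝ => (0:ℝ)) = fun _ => (0:ℝ) from rfl] -- noop
      rw [Measure.map_const, measure_univ, one_smul, gaussianReal_zero_var]
  | succ n ih =>
      set v : ℝ≥0 := nnsq σ with hv
      have hmp := measurePreserving_piFinSuccAbove
        (fun i : Fin (n + 1) => gaussianReal (μ i) v) 0
      have key : (fun x : Fin (n + 1) → ℝ => ∑ i, w i * x i)
          = (fun p : ℝ × (Fin n → ℝ) => w 0 * p.1 + ∑ i, w i.succ * p.2 i)
            ∘ (MeasurableEquiv.piFinSuccAbove (fun _ => ℝ) 0) := by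
        funext x
        simp [MeasurableEquiv.piFinSuccAbove, Fin.sum_univ_succ, Fin.succAbove_zero, Fin.tail]
      have hg : Measurable (fun p : ℝ × (Fin n → ℝ) => w 0 * p.1 + ∑ i, w i.succ * p.2 i) := by
        fun_prop
      rw [show gaussPi μ σ = Measure.pi (fun i : Fin (n+1) => gaussianReal (μ i) v) from rfl,
        key, ← Measure.map_map hg (MeasurableEquiv.piFinSuccAbove (fun _ => ℝ) 0).measurable,
        hmp.map_eq]
      have hpi : (Measure.pi fun j : Fin n => gaussianReal (μ ((0:Fin (n+1)).succAbove j)) v)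
          = gaussPi (fun j => μ j.succ) σ := by
        simp only [Fin.succAbove_zero]
        rfl
      rw [hpi]
      have split : (fun p : ℝ × (Fin n → ℝ) => w 0 * p.1 + ∑ i, w i.succ * p.2 i)
          = (fun q : ℝ × ℝ => q.1 + q.2)
            ∘ Prod.map (fun a : ℝ => w 0 * a) (fun t : Fin n → ℝ => ∑ i, w i.succ * t i) := rfl
      rw [split, ← Measure.map_map measurable_add ((measurable_const_mul _).prodMap (by fun_prop)),
        ← Measure.map_prod_map _ _ (measurable_const_mul _) (by fun_prop)]
      rw [show (fun a : ℝ => w 0 * a) = (w 0 * ·) from rfl, gaussianReal_map_const_mul, ih,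
        gaussianReal_prod_map_add, Fin.sum_univ_succ (f := fun i => w i * μ i),
        Fin.sum_univ_succ (f := fun i => nnsq (w i) * v)]
      rfl


open scoped NNReal ENNReal



variable {d : ℕ}

lemma robust_set_eq [Nonempty (Fin d)] (w : Fin d → ℝ) {ε : ℝ} (hε : 0 ≤ ε) :
    {p : (Fin d → ℝ) × ℝ | ∃ u, nrmInf (u - p.1) ≤ ε ∧ p.2 * ip w u ≤ 0}
      = {p : (Fin d → ℝ) × ℝ | p.2 * ip w p.1 ≤ ε * |p.2| * nrm1 w} := by
  ext ⟨x, y⟩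
  simp only [Set.mem_setOf_eq]
  constructor
  · rintro ⟨u, hu, hyu⟩
    have hcoord : ∀ i, |u i - x i| ≤ ε := by
      intro i
      refine le_trans ?_ hu
      have := le_ciSup (Set.Finite.bddAbove (Set.finite_range fun i => |(u - x) i|)) i
      simpa [nrmInf] using this
    have hdiff : y * ip w x - y * ip w u ≤ ε * |y| * nrm1 w := by
      unfold ip nrm1
      calc y * ∑ i, w i * x i - y * ∑ i, w i * u i
            = ∑ i, y * (w i * (x i - u i)) := by
            rw [Finset.mul_sum, Finset.mul_sum, ← Finset.sum_sub_distrib]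
            exact Finset.sum_congr rfl fun i _ => by ring
        _ ≤ ∑ i, ε * (|y| * |w i|) := by
            refine Finset.sum_le_sum fun i _ => ?_
            calc y * (w i * (x i - u i)) ≤ |y * (w i * (x i - u i))| := le_abs_self _
              _ = |y| * |w i| * |u i - x i| := by
                  rw [abs_mul, abs_mul, abs_sub_comm, mul_assoc]
              _ ≤ |y| * |w i| * ε := by
                  exact mul_le_mul_of_nonneg_left (hcoord i)
                    (mul_nonneg (abs_nonneg _) (abs_nonneg _))
              _ = ε * (|y| * |w i|) := by ring
        _ = ε * |y| * ∑ i, |w i| := by rw [← Finset.mul_sum, ← Finset.mul_sum]; ring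
    linarith
  · intro h
    refine ⟨fun i => x i - ε * Real.sign (y * w i), ?_, ?_⟩
    · unfold nrmInf
      refine ciSup_le fun i => ?_
      have : |(fun i => x i - ε * Real.sign (y * w i)) i - x i|
          = ε * |Real.sign (y * w i)| := by
        simp only [Pi.sub_apply]
        rw [show x i - ε * Real.sign (y * w i) - x i = -(ε * Real.sign (y * w i)) by ring,
          abs_neg, abs_mul, abs_of_nonneg hε]
      simp only [Pi.sub_apply] at this ⊢
      rw [this]
      calc ε * |Real.sign (y * w i)| ≤ ε * 1 :=
            mul_le_mul_of_nonneg_left (abs_sign_le _) hε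
        _ = ε := mul_one ε
    · unfold ip
      have expand : y * ∑ i, w i * (x i - ε * Real.sign (y * w i))
          = y * (∑ i, w i * x i) - ε * ∑ i, |y * w i| := by
        rw [Finset.mul_sum, Finset.mul_sum, Finset.mul_sum, ← Finset.sum_sub_distrib]
        refine Finset.sum_congr rfl fun i _ => ?_
        have := real_sign_mul_self (y * w i)
        nlinarith [this]
      have habs : ∑ i, |y * w i| = |y| * nrm1 w := by
        unfold nrm1
        rw [Finset.mul_sum]
        exact Finset.sum_congr rfl fun i _ => abs_mul y (w i)
      rw [expand, habs]
      unfold ip at h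
      linarith

lemma robust_set_measurable (w : Fin d → ℝ) (ε : ℝ) :
    MeasurableSet {p : (Fin d → ℝ) × ℝ | p.2 * ip w p.1 ≤ ε * |p.2| * nrm1 w} := by
  apply measurableSet_le
  · exact measurable_snd.mul ((Finset.measurable_sum Finset.univ fun i _ =>
      (measurable_const.mul ((measurable_pi_apply i).comp measurable_fst))).comp measurable_id)
  · exact (measurable_const.mul measurable_snd.abs).mul measurable_const

lemma gaussianReal_Iic_std (m c : ℝ) {V : ℝ≥0} (hV : V ≠ 0) :
    gaussianReal m V (Set.Iic c) = gaussianReal 0 1 (Set.Iic ((c - m) / Real.sqrt V)) := by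
  have hVpos : (0:ℝ) < V := lt_of_le_of_ne V.coe_nonneg (by exact_mod_cast hV.symm)
  have hs : (0:ℝ) < Real.sqrt V := Real.sqrt_pos.2 hVpos
  have h2 := gaussianReal_map_const_mul (μ := 0) (v := 1) (Real.sqrt V)
  have h3 : (⟨Real.sqrt V ^ 2, sq_nonneg _⟩ : ℝ≥0) * 1 = V := by
    ext
    simp [Real.sq_sqrt V.coe_nonneg]
  replace h2 : Measure.map (fun x => Real.sqrt V * x) (gaussianReal 0 1) = gaussianReal 0 V := by
    rw [h2, mul_zero]; congr 1
  have h4 := gaussianReal_map_add_const (μ := 0) (v := V) m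
  rw [zero_add, ← h2] at h4
  rw [← h4, Measure.map_map (measurable_add_const m) (measurable_const_mul _),
    show ((fun x => x + m) ∘ fun x : ℝ => Real.sqrt V * x)
      = fun x : ℝ => Real.sqrt V * x + m from rfl,
    Measure.map_apply ((measurable_const_mul _).add_const m) measurableSet_Iic]
  congr 1
  ext z
  simp only [Set.mem_preimage, Function.comp_apply, Set.mem_Iic]
  rw [le_div_iff₀ hs]
  constructor <;> intro hz <;> nlinarith [mul_comm z (Real.sqrt V)]

lemma gaussianReal_neg_Ici (m c : ℝ) (V : ℝ≥0) :
    gaussianReal (-m) V (Set.Ici (-c)) = gaussianReal m V (Set.Iic c) := by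
  have hmm : gaussianReal m V = Measure.map (fun x : ℝ => -x) (gaussianReal (-m) V) := by
    have h2 := gaussianReal_map_const_mul (μ := -m) (v := V) (-1)
    simp only [neg_one_mul, neg_neg] at h2
    rw [h2]
    congr 1
    ext
    simp [NNReal.coe_mul]
  rw [hmm, Measure.map_apply measurable_neg measurableSet_Iic]
  congr 1
  ext z
  simp only [Set.mem_preimage, Set.mem_Iic, Set.mem_Ici]
  constructor <;> intro <;> linarith


lemma ip_comm {d : ℕ} (x y : Fin d → ℝ) : ip x y = ip y x :=
  Finset.sum_congr rfl fun i _ => mul_comm _ _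

lemma linRobErr_eq {d : ℕ} (hd : 0 < d) (μ : Fin d → ℝ) {σ : ℝ} (hσ : 0 < σ) {ε : ℝ}
    (hε : 0 ≤ ε) (w : Fin d → ℝ) (hw : w ≠ 0) :
    linRobErr μ σ ε w = (gaussianReal 0 1
      (Set.Iic ((ε * nrm1 w - ip w μ) / (σ * nrm2 w)))).toReal := by
  haveI : Nonempty (Fin d) := ⟨⟨0, hd⟩⟩
  unfold linRobErr gaussLabeled
  rw [robust_set_eq w hε]
  rw [Measure.add_apply, Measure.smul_apply, Measure.smul_apply,
    Measure.map_apply measurable_prodMk_right (robust_set_measurable w ε),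
    Measure.map_apply measurable_prodMk_right (robust_set_measurable w ε)]
  have hpre1 : (fun x : Fin d → ℝ => (x, (1:ℝ))) ⁻¹'
      {p : (Fin d → ℝ) × ℝ | p.2 * ip w p.1 ≤ ε * |p.2| * nrm1 w}
      = (fun x : Fin d → ℝ => ∑ i, w i * x i) ⁻¹' Set.Iic (ε * nrm1 w) := by
    ext x
    simp [ip, Set.mem_preimage, Set.mem_Iic]
  have hpre2 : (fun x : Fin d → ℝ => (x, (-1:ℝ))) ⁻¹'
      {p : (Fin d → ℝ) × ℝ | p.2 * ip w p.1 ≤ ε * |p.2| * nrm1 w}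
      = (fun x : Fin d → ℝ => ∑ i, w i * x i) ⁻¹' Set.Ici (-(ε * nrm1 w)) := by
    ext x
    simp only [Set.mem_preimage, Set.mem_setOf_eq, Set.mem_Ici, ip, abs_neg, abs_one]
    constructor <;> intro h <;> nlinarith [h]
  rw [hpre1, hpre2,
    ← Measure.map_apply (by fun_prop) measurableSet_Iic,
    ← Measure.map_apply (by fun_prop) measurableSet_Ici,
    gaussPi_map_sum, gaussPi_map_sum]
  have hneg : ∑ i, w i * (-μ) i = -∑ i, w i * μ i := by
    rw [← Finset.sum_neg_distrib]
    exact Finset.sum_congr rfl fun i _ => by simp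
  rw [hneg, gaussianReal_neg_Ici]
  have hV : (∑ i, nnsq (w i) * nnsq σ) ≠ 0 := by
    obtain ⟨i0, hi0⟩ := Function.ne_iff.1 hw
    intro h0
    have hc : ((∑ i, nnsq (w i) * nnsq σ : ℝ≥0) : ℝ) = 0 := by rw [h0]; simp
    rw [NNReal.coe_sum] at hc
    have : ∀ i ∈ Finset.univ, (0:ℝ) ≤ ((nnsq (w i) * nnsq σ : ℝ≥0) : ℝ) :=
      fun i _ => NNReal.coe_nonneg _
    have hz := (Finset.sum_eq_zero_iff_of_nonneg this).1 hc i0 (Finset.mem_univ i0)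
    have : (w i0) ^ 2 * σ ^ 2 = 0 := by
      rw [NNReal.coe_mul] at hz; exact hz
    have hσ2 : σ ^ 2 ≠ 0 := pow_ne_zero _ hσ.ne'
    have : (w i0) ^ 2 = 0 := by
      rcases mul_eq_zero.1 this with h | h
      · exact h
      · exact absurd h hσ2
    exact hi0 (pow_eq_zero_iff two_ne_zero |>.1 this)
  rw [gaussianReal_Iic_std _ _ hV]
  have hVc : ((∑ i, nnsq (w i) * nnsq σ : ℝ≥0) : ℝ) = (∑ i, (w i) ^ 2) * σ ^ 2 := by
    rw [NNReal.coe_sum, Finset.sum_mul]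
    exact Finset.sum_congr rfl fun i _ => by rw [NNReal.coe_mul]; rfl
  have hsqrt : Real.sqrt ((∑ i, nnsq (w i) * nnsq σ : ℝ≥0) : ℝ) = σ * nrm2 w := by
    rw [hVc, Real.sqrt_mul (Finset.sum_nonneg fun i _ => sq_nonneg _),
      Real.sqrt_sq hσ.le]
    unfold nrm2
    ring
  rw [hsqrt]
  have hfin : (1/2 : ℝ≥0∞) • (gaussianReal 0 1
        (Set.Iic ((ε * nrm1 w - ∑ i, w i * μ i) / (σ * nrm2 w))))
      + (1/2 : ℝ≥0∞) • (gaussianReal 0 1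
        (Set.Iic ((ε * nrm1 w - ∑ i, w i * μ i) / (σ * nrm2 w))))
      = gaussianReal 0 1 (Set.Iic ((ε * nrm1 w - ∑ i, w i * μ i) / (σ * nrm2 w))) := by
    simp only [smul_eq_mul]
    rw [← add_mul, show (1/2 + 1/2 : ℝ≥0∞) = 1 by
      rw [one_div, ENNReal.inv_two_add_inv_two], one_mul]
  rw [hfin]
  rfl

lemma gauss_cdf_mono {c1 c2 : ℝ} (h : c1 ≤ c2) :
    (gaussianReal 0 1 (Set.Iic c1)).toReal ≤ (gaussianReal 0 1 (Set.Iic c2)).toReal :=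
  ENNReal.toReal_mono (measure_ne_top _ _) (measure_mono (Set.Iic_subset_Iic.2 h))

end Aux

/-- soft-thresholding maximizes `μᵀw - ε‖w‖₁` over the unit sphere and
minimizes the ℓ∞-robust error among linear classifiers. -/
theorem soft_thresholding_optimal
    {d : ℕ} (μ : Fin d → ℝ) (ε : ℝ) (hε : 0 ≤ ε)
    (hbig : ∃ j, ε < |μ j|) (σ : ℝ) (hσ : 0 < σ) :
    (nrm2 ((nrm2 (softThresh ε μ))⁻¹ • softThresh ε μ) = 1) ∧
    (ip μ ((nrm2 (softThresh ε μ))⁻¹ • softThresh ε μ)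
        - ε * nrm1 ((nrm2 (softThresh ε μ))⁻¹ • softThresh ε μ)
      = nrm2 (softThresh ε μ)) ∧
    (∀ w : Fin d → ℝ, nrm2 w = 1 → ip μ w - ε * nrm1 w ≤ nrm2 (softThresh ε μ)) ∧
    (∀ w : Fin d → ℝ, w ≠ 0 →
      linRobErr μ σ ε ((nrm2 (softThresh ε μ))⁻¹ • softThresh ε μ)
        ≤ linRobErr μ σ ε w) := by
  obtain ⟨j0, hj0⟩ := hbig
  have hd : 0 < d := j0.pos
  set T := softThresh ε μ with hTdef
  have ht : 0 < nrm2 T := nrm2_softThresh_pos μ hε ⟨j0, hj0⟩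
  have habs : |(nrm2 T)⁻¹| = (nrm2 T)⁻¹ := abs_of_nonneg (inv_nonneg.2 ht.le)
  have p1 : nrm2 ((nrm2 T)⁻¹ • T) = 1 := by
    rw [nrm2_smul, habs, inv_mul_cancel₀ ht.ne']
  have hsum : ip μ T - ε * nrm1 T = (nrm2 T) ^ 2 := by
    rw [ip_sub_eps μ hε, ← nrm2_sq]
  have p2 : ip μ ((nrm2 T)⁻¹ • T) - ε * nrm1 ((nrm2 T)⁻¹ • T) = nrm2 T := by
    rw [ip_smul, nrm1_smul, habs,
      show (nrm2 T)⁻¹ * ip μ T - ε * ((nrm2 T)⁻¹ * nrm1 T)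
        = (nrm2 T)⁻¹ * (ip μ T - ε * nrm1 T) by ring, hsum]
    field_simp
  refine ⟨p1, p2, fun w hw => part3 μ hε w hw, ?_⟩
  intro w hw
  have hwstar : ((nrm2 T)⁻¹ • T) ≠ 0 := by
    intro h0
    rw [h0] at p1
    simp [nrm2] at p1
  have hnw : 0 < nrm2 w := by
    obtain ⟨i, hi⟩ := Function.ne_iff.1 hw
    simp only [Pi.zero_apply] at hi
    unfold nrm2
    exact Real.sqrt_pos.2
      (Finset.sum_pos' (fun _ _ => sq_nonneg _) ⟨i, Finset.mem_univ i, by positivity⟩)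
  rw [linRobErr_eq hd μ hσ hε _ hwstar, linRobErr_eq hd μ hσ hε w hw]
  apply gauss_cdf_mono
  rw [ip_comm w μ, ip_comm ((nrm2 T)⁻¹ • T) μ, p1]
  have hbound : ip μ w - ε * nrm1 w ≤ nrm2 w * nrm2 T := by
    have habs2 : |(nrm2 w)⁻¹| = (nrm2 w)⁻¹ := abs_of_nonneg (inv_nonneg.2 hnw.le)
    have hunit : nrm2 ((nrm2 w)⁻¹ • w) = 1 := by
      rw [nrm2_smul, habs2, inv_mul_cancel₀ hnw.ne']
    have h3 := part3 μ hε _ hunit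
    rw [ip_smul, nrm1_smul, habs2] at h3
    have h4 : (nrm2 w)⁻¹ * (ip μ w - ε * nrm1 w) ≤ nrm2 T := by
      calc (nrm2 w)⁻¹ * (ip μ w - ε * nrm1 w)
          = (nrm2 w)⁻¹ * ip μ w - ε * ((nrm2 w)⁻¹ * nrm1 w) := by ring
        _ ≤ nrm2 T := h3
    calc ip μ w - ε * nrm1 w = nrm2 w * ((nrm2 w)⁻¹ * (ip μ w - ε * nrm1 w)) := by
          field_simp
      _ ≤ nrm2 w * nrm2 T := mul_le_mul_of_nonneg_left h4 hnw.le
  have hE : ε * nrm1 ((nrm2 T)⁻¹ • T) - ip μ ((nrm2 T)⁻¹ • T) = -(nrm2 T) := by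
    linarith [p2]
  rw [hE]
  rw [div_le_div_iff₀ (by positivity) (by positivity)]
  nlinarith [mul_le_mul_of_nonneg_right hbound hσ.le, mul_pos hσ hnw]

end
end
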